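/- Let X be a set, K : X × X → ℂ a bounded function, and x₁, …, xₙ ∈ X pairwise distinct points such that the kernel matrix K[x] is nonsingular, and assume ‖(K[x])^{-1} K_x(t)‖₁ ≤ 1 for every t ∈ X. Given y ∈ ℂⁿ, define f₀ : X → ℂ by f₀(t) := ∑_{k=1}^n (yᵀ(K[x])^{-1})_k K(t, x_k). Then f₀(x_i) = y_i for all i ∈ {1, …, n}, sup_{t∈X} |f₀(t)| = max_{1≤i≤n} |y_i|, and sup_{t∈X} |f₀(t)| ≤ sup_{t∈X} |g(t)| for every function g : X → ℂ with g(x_i) = y_i for all i; that is, f₀ is a supremum-norm minimal interpolant of the data. -/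

import Mathlib

open Matrix
open scoped ENNReal NNReal

/-- The kernel matrix `K[x]`, with `(j,k)` entry `K(x_k, x_j)`. -/
noncomputable def kernelMatrix {X : Type*} (K : X → X → ℂ) {n : ℕ} (x : Fin n → X) :
    Matrix (Fin n) (Fin n) ℂ := Matrix.of fun j k => K (x k) (x j)

/-- The vector `K_x(t)`, with `j`-th entry `K(t, x_j)`. -/
noncomputable def kernelVec {X : Type*} (K : X → X → ℂ) {n : ℕ} (x : Fin n → X) (t : X) :
    Fin n → ℂ := fun j => K t (x j)

/-- The `ℓ¹` norm of a vector in `ℂⁿ`. -/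
noncomputable def l1norm {n : ℕ} (v : Fin n → ℂ) : ℝ := ∑ j, ‖v j‖

theorem stmt_11 {X : Type*} (K : X → X → ℂ) (M : ℝ)
    (hK : ∀ s t, ‖K s t‖ ≤ M)
    (n : ℕ) (x : Fin n → X) (hx : Function.Injective x)
    (hdet : IsUnit (kernelMatrix K x).det)
    (hA4 : ∀ t : X, l1norm ((kernelMatrix K x)⁻¹ *ᵥ kernelVec K x t) ≤ 1)
    (y : Fin n → ℂ) :
    (∀ i, (∑ k, (y ᵥ* (kernelMatrix K x)⁻¹) k * K (x i) (x k)) = y i) ∧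
    (⨆ t : X, (‖∑ k, (y ᵥ* (kernelMatrix K x)⁻¹) k * K t (x k)‖₊ : ℝ≥0∞)) =
      (⨆ i : Fin n, (‖y i‖₊ : ℝ≥0∞)) ∧
    ∀ g : X → ℂ, (∀ i, g (x i) = y i) →
      (⨆ t : X, (‖∑ k, (y ᵥ* (kernelMatrix K x)⁻¹) k * K t (x k)‖₊ : ℝ≥0∞)) ≤
        ⨆ t : X, (‖g t‖₊ : ℝ≥0∞) := by
  set A := kernelMatrix K x with hAdef
  have hinterp : ∀ i, (∑ k, (y ᵥ* A⁻¹) k * K (x i) (x k)) = y i := by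
    intro i
    have h1 : (∑ k, (y ᵥ* A⁻¹) k * K (x i) (x k)) = ((y ᵥ* A⁻¹) ᵥ* A) i := by
      simp [Matrix.vecMul, dotProduct, hAdef, kernelMatrix]
    rw [h1, Matrix.vecMul_vecMul, Matrix.nonsing_inv_mul A hdet, Matrix.vecMul_one]
  have hbound : ∀ t, (‖∑ k, (y ᵥ* A⁻¹) k * K t (x k)‖₊ : ℝ≥0∞) ≤ ⨆ i, (‖y i‖₊ : ℝ≥0∞) := by
    intro t
    set c := A⁻¹ *ᵥ kernelVec K x t with hc
    have hre : (∑ k, (y ᵥ* A⁻¹) k * K t (x k)) = ∑ j, y j * c j := by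
      have := (Matrix.dotProduct_mulVec y A⁻¹ (kernelVec K x t)).symm
      simpa [dotProduct, kernelVec, hc] using this
    have hcle : (∑ j, (‖c j‖₊ : ℝ≥0∞)) ≤ 1 := by
      have h := hA4 t
      have h2 : (∑ j, ‖c j‖₊ : ℝ≥0) ≤ 1 := by
        rw [← NNReal.coe_le_coe]
        push_cast
        simpa [l1norm, hc] using h
      calc (∑ j, (‖c j‖₊ : ℝ≥0∞)) = ((∑ j, ‖c j‖₊ : ℝ≥0) : ℝ≥0∞) := by
            rw [ENNReal.coe_finset_sum]
        _ ≤ 1 := by exact_mod_cast h2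
    rw [hre]
    calc (‖∑ j, y j * c j‖₊ : ℝ≥0∞) ≤ ∑ j, (‖y j * c j‖₊ : ℝ≥0∞) := by
          rw [← ENNReal.coe_finset_sum]
          exact_mod_cast nnnorm_sum_le _ _
      _ = ∑ j, (‖y j‖₊ : ℝ≥0∞) * (‖c j‖₊ : ℝ≥0∞) := by simp [nnnorm_mul]
      _ ≤ ∑ j, (⨆ i, (‖y i‖₊ : ℝ≥0∞)) * (‖c j‖₊ : ℝ≥0∞) :=
          Finset.sum_le_sum fun j _ => mul_le_mul_left
            (le_iSup (fun i => (‖y i‖₊ : ℝ≥0∞)) j) _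
      _ = (⨆ i, (‖y i‖₊ : ℝ≥0∞)) * ∑ j, (‖c j‖₊ : ℝ≥0∞) := by rw [Finset.mul_sum]
      _ ≤ (⨆ i, (‖y i‖₊ : ℝ≥0∞)) * 1 := mul_le_mul_right hcle _
      _ = ⨆ i, (‖y i‖₊ : ℝ≥0∞) := mul_one _
  have hsup : (⨆ t : X, (‖∑ k, (y ᵥ* A⁻¹) k * K t (x k)‖₊ : ℝ≥0∞)) =
      ⨆ i : Fin n, (‖y i‖₊ : ℝ≥0∞) := by
    apply le_antisymm
    · exact iSup_le hbound
    · refine iSup_le fun i => ?_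
      have h := hinterp i
      calc (‖y i‖₊ : ℝ≥0∞) = ‖∑ k, (y ᵥ* A⁻¹) k * K (x i) (x k)‖₊ := by rw [h]
        _ ≤ _ := le_iSup (fun t => (‖∑ k, (y ᵥ* A⁻¹) k * K t (x k)‖₊ : ℝ≥0∞)) (x i)
  refine ⟨hinterp, hsup, fun g hg => ?_⟩
  rw [hsup]
  refine iSup_le fun i => ?_
  rw [← hg i]
  exact le_iSup (fun t => (‖g t‖₊ : ℝ≥0∞)) (x i)
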